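/- For every integer k ≥ 1, 2^k = ∑_{n=k}^{∞} (-1)^{n-k} 4^n s(n,k) / (n! (2n+1) C(2n,n)), where C(2n,n) is the central binomial coefficient. -/

import Mathlib

open scoped BigOperators

noncomputable def stirlingS1 (n k : ℕ) : ℝ :=
  (∏ i ∈ Finset.range n, (Polynomial.X - Polynomial.C (i : ℝ))).coeff k

open Polynomial

/-- Unsigned Stirling numbers of the first kind. -/
def us : ℕ → ℕ → ℕ
  | 0, 0 => 1
  | 0, _+1 => 0
  | _+1, 0 => 0
  | n+1, k+1 => us n k + n * us n (k+1)

lemma us_le_factorial : ∀ n k, us n k ≤ n.factorial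
  | 0, 0 => le_refl _
  | 0, _+1 => by simp [us]
  | n+1, 0 => by simp [us]
  | n+1, k+1 => by
      have h1 := us_le_factorial n k
      have h2 := us_le_factorial n (k+1)
      calc us (n+1) (k+1) = us n k + n * us n (k+1) := rfl
        _ ≤ n.factorial + n * n.factorial :=
            Nat.add_le_add h1 (Nat.mul_le_mul_left n h2)
        _ = (n+1).factorial := by rw [Nat.factorial_succ]; ring

lemma us_eq_zero_of_lt : ∀ n k, n < k → us n k = 0
  | 0, _+1, _ => rfl
  | n+1, k+1, h => by
      have h1 := us_eq_zero_of_lt n k (by omega)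
      have h2 := us_eq_zero_of_lt n (k+1) (by omega)
      show us n k + n * us n (k+1) = 0
      simp [h1, h2]

lemma prod_coeff : ∀ (n k : ℕ),
    (∏ i ∈ Finset.range n, (X - C (i : ℝ))).coeff k = (-1:ℝ)^(n+k) * (us n k : ℝ)
  | 0, 0 => by simp [us]
  | 0, k+1 => by simp [show us 0 (k+1) = 0 from rfl, Polynomial.coeff_one]
  | n+1, 0 => by
      rw [Finset.prod_range_succ, Polynomial.mul_coeff_zero, prod_coeff n 0]
      have : (X - C (n:ℝ)).coeff 0 = -(n:ℝ) := by simp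
      rw [this]
      match n with
      | 0 => simp [show us 1 0 = 0 from rfl, show us 0 0 = 1 from rfl]
      | m+1 => simp [show us (m+1) 0 = 0 from rfl, show us (m+2) 0 = 0 from rfl]
  | n+1, k+1 => by
      rw [Finset.prod_range_succ, Polynomial.coeff_mul_X_sub_C,
        prod_coeff n k, prod_coeff n (k+1)]
      have h : us (n+1) (k+1) = us n k + n * us n (k+1) := rfl
      rw [h]
      have e1 : (-1:ℝ)^(n+(k+1)) = -(-1:ℝ)^(n+k) := by
        rw [show n+(k+1) = (n+k)+1 by ring, pow_succ]; ring
      have e2 : (-1:ℝ)^((n+1)+(k+1)) = (-1:ℝ)^(n+k) := by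
        rw [show (n+1)+(k+1) = (n+k)+2 by ring, pow_add]; ring
      rw [e1, e2]
      push_cast
      ring
open MeasureTheory

lemma summable_aux {s : ℝ} (h0 : 0 ≤ s) (h1 : s < 1) {f : ℕ → ℝ}
    (hf0 : ∀ m, 0 ≤ f m) (hf : ∀ m, f m ≤ ((m : ℝ) + 1) * s ^ m) : Summable f := by
  have hg : Summable (fun m : ℕ => ((m : ℝ) + 1) * s ^ m) := by
    have h1' : Summable (fun m : ℕ => (m : ℝ) * s ^ m) := by
      simpa using summable_pow_mul_geometric_of_norm_lt_one 1
        (r := s) (by rwa [Real.norm_eq_abs, abs_of_nonneg h0])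
    have h2' : Summable (fun m : ℕ => s ^ m) := summable_geometric_of_lt_one h0 h1
    simpa [add_mul, one_mul] using h1'.add h2'
  exact Summable.of_nonneg_of_le hf0 hf hg

lemma aux_le {a : ℝ} {m : ℕ} {s : ℝ} (h0 : 0 ≤ s)
    (ha : a ≤ ((m : ℝ) + 1) * (m.factorial : ℝ)) :
    a * s ^ m / (m.factorial : ℝ) ≤ ((m : ℝ) + 1) * s ^ m := by
  rw [div_le_iff₀ (by positivity : (0:ℝ) < (m.factorial : ℝ))]
  calc a * s ^ m ≤ (((m : ℝ) + 1) * (m.factorial : ℝ)) * s ^ m :=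
        mul_le_mul_of_nonneg_right ha (pow_nonneg h0 m)
    _ = ((m : ℝ) + 1) * s ^ m * (m.factorial : ℝ) := by ring

lemma summable_us (k : ℕ) {s : ℝ} (h0 : 0 ≤ s) (h1 : s < 1) :
    Summable (fun m : ℕ => (us m k : ℝ) * s ^ m / (m.factorial : ℝ)) := by
  refine summable_aux h0 h1 (fun m => by positivity) (fun m => aux_le h0 ?_)
  calc (us m k : ℝ) ≤ (m.factorial : ℝ) := by exact_mod_cast us_le_factorial m k
    _ ≤ ((m:ℝ)+1) * (m.factorial : ℝ) :=
        le_mul_of_one_le_left (by positivity) (by exact_mod_cast Nat.succ_le_succ (Nat.zero_le m))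

lemma summable_usD (k : ℕ) {s : ℝ} (h0 : 0 ≤ s) (h1 : s < 1) :
    Summable (fun m : ℕ => (us (m+1) (k+1) : ℝ) * s ^ m / (m.factorial : ℝ)) := by
  refine summable_aux h0 h1 (fun m => by positivity) (fun m => aux_le h0 ?_)
  calc (us (m+1) (k+1) : ℝ) ≤ ((m+1).factorial : ℝ) := by
        exact_mod_cast us_le_factorial (m+1) (k+1)
    _ = ((m:ℝ)+1) * (m.factorial : ℝ) := by exact_mod_cast Nat.factorial_succ m

lemma summable_usB (k : ℕ) {s : ℝ} (h0 : 0 ≤ s) (h1 : s < 1) :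
    Summable (fun m : ℕ => (m : ℝ) * (us m (k+1) : ℝ) * s ^ m / (m.factorial : ℝ)) := by
  refine summable_aux h0 h1 (fun m => by positivity) (fun m => aux_le h0 ?_)
  calc (m : ℝ) * (us m (k+1) : ℝ) ≤ (m : ℝ) * (m.factorial : ℝ) := by
        have : (us m (k+1) : ℝ) ≤ (m.factorial : ℝ) := by exact_mod_cast us_le_factorial m (k+1)
        exact mul_le_mul_of_nonneg_left this (Nat.cast_nonneg m)
    _ ≤ ((m:ℝ)+1) * (m.factorial : ℝ) := by
        have : (0:ℝ) ≤ (m.factorial : ℝ) := by positivity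
        nlinarith

lemma hasDerivAt_L (k : ℕ) {s : ℝ} (hs : s < 1) :
    HasDerivAt (fun x : ℝ => (-Real.log (1-x)) ^ (k+1) / ((k+1).factorial : ℝ))
      ((-Real.log (1-s)) ^ k / ((k.factorial : ℝ) * (1-s))) s := by
  have h1s : (0:ℝ) < 1 - s := by linarith
  have h1 : HasDerivAt (fun x : ℝ => 1 - x) (-1) s := by
    simpa using (hasDerivAt_id s).const_sub 1
  have h2 : HasDerivAt (fun x : ℝ => Real.log (1-x)) ((1-s)⁻¹ * -1) s :=
    (Real.hasDerivAt_log h1s.ne').comp s h1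
  have h3 : HasDerivAt (fun x : ℝ => -Real.log (1-x)) ((1-s)⁻¹) s := by
    have := h2.neg; rw [show -((1-s)⁻¹ * -1) = (1-s)⁻¹ by ring] at this; exact this
  have h4 := (h3.pow (k+1)).div_const (((k+1).factorial : ℝ))
  refine h4.congr_deriv ?_
  have hf : (((k+1).factorial : ℝ)) = ((k:ℝ)+1) * (k.factorial : ℝ) := by
    exact_mod_cast Nat.factorial_succ k
  rw [hf]
  simp only [Nat.add_sub_cancel, Nat.cast_add, Nat.cast_one]
  field_simp

lemma contOn_L (k : ℕ) {t : ℝ} (ht : t < 1) :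
    ContinuousOn (fun s : ℝ => (-Real.log (1-s)) ^ k / ((k.factorial : ℝ) * (1-s)))
      (Set.Icc 0 t) := by
  intro s hs
  have h1s : (0:ℝ) < 1 - s := by have := hs.2; linarith
  apply ContinuousAt.continuousWithinAt
  have hc1 : ContinuousAt (fun x : ℝ => 1 - x) s := by fun_prop
  have hc2 : ContinuousAt (fun x : ℝ => Real.log (1-x)) s :=
    (Real.continuousAt_log h1s.ne').comp hc1
  exact (hc2.neg.pow k).div (continuousAt_const.mul hc1) (by positivity)

lemma gen : ∀ (k : ℕ) {t : ℝ}, 0 ≤ t → t < 1 →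
    ∑' m : ℕ, (us m k : ℝ) * t ^ m / (m.factorial : ℝ)
      = (-Real.log (1 - t)) ^ k / (k.factorial : ℝ) := by
  intro k
  induction k with
  | zero =>
      intro t h0 h1
      rw [tsum_eq_single 0 ?_]
      · simp [show us 0 0 = 1 from rfl]
      · intro m hm
        match m, hm with
        | m+1, _ => simp [show us (m+1) 0 = 0 from rfl]
  | succ k ih =>
      intro t h0 h1
      -- pointwise value of the "derivative" series
      have key : ∀ s : ℝ, 0 ≤ s → s < 1 →
          ∑' m : ℕ, (us (m+1) (k+1) : ℝ) * s ^ m / (m.factorial : ℝ) =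
            (-Real.log (1-s)) ^ k / ((k.factorial : ℝ) * (1-s)) := by
        intro s hs0 hs1
        have h1s : (0:ℝ) < 1 - s := by linarith
        have hsum_d := summable_usD k hs0 hs1
        have hsum_k := summable_us k hs0 hs1
        have hsum_b := summable_usB k hs0 hs1
        have hterm : ∀ m : ℕ, (us (m+1) (k+1) : ℝ) * s ^ m / (m.factorial : ℝ) =
            (us m k : ℝ) * s ^ m / (m.factorial : ℝ)
              + (m : ℝ) * (us m (k+1) : ℝ) * s ^ m / (m.factorial : ℝ) := by
          intro m
          have h : us (m+1) (k+1) = us m k + m * us m (k+1) := rfl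
          rw [h]; push_cast; ring
        have e1 : ∑' m : ℕ, (us (m+1) (k+1) : ℝ) * s ^ m / (m.factorial : ℝ) =
            (∑' m : ℕ, (us m k : ℝ) * s ^ m / (m.factorial : ℝ))
              + ∑' m : ℕ, (m : ℝ) * (us m (k+1) : ℝ) * s ^ m / (m.factorial : ℝ) := by
          rw [← Summable.tsum_add hsum_k hsum_b]; exact tsum_congr hterm
        have e2 : ∑' m : ℕ, (m : ℝ) * (us m (k+1) : ℝ) * s ^ m / (m.factorial : ℝ) =
            s * ∑' m : ℕ, (us (m+1) (k+1) : ℝ) * s ^ m / (m.factorial : ℝ) := by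
          rw [Summable.tsum_eq_zero_add hsum_b, ← tsum_mul_left]
          simp only [Nat.cast_zero, zero_mul, zero_div, zero_add]
          refine tsum_congr fun m => ?_
          have hf : (((m+1).factorial : ℝ)) = ((m:ℝ)+1) * (m.factorial : ℝ) := by
            exact_mod_cast Nat.factorial_succ m
          have hm0 : (m.factorial : ℝ) ≠ 0 := by positivity
          push_cast
          rw [hf, pow_succ]
          field_simp
        rw [ih hs0 hs1] at e1
        rw [e2] at e1
        set d := ∑' m : ℕ, (us (m+1) (k+1) : ℝ) * s ^ m / (m.factorial : ℝ) with hd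
        have e3 : d * (1 - s) = (-Real.log (1-s)) ^ k / (k.factorial : ℝ) := by
          linear_combination e1
        have hk0 : (k.factorial : ℝ) ≠ 0 := by positivity
        rw [eq_div_iff (by positivity : (k.factorial : ℝ) * (1-s) ≠ 0)]
        field_simp at e3
        linear_combination e3
      -- rewrite LHS, dropping the zero-th term
      have hA := summable_us (k+1) h0 h1
      rw [Summable.tsum_eq_zero_add hA]
      have h00 : (us 0 (k+1) : ℝ) * t ^ 0 / ((0:ℕ).factorial : ℝ) = 0 := by
        simp [show us 0 (k+1) = 0 from rfl]
      rw [h00, zero_add]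
      -- each term as an integral
      have hterm_int : ∀ m : ℕ, (us (m+1) (k+1) : ℝ) * t ^ (m+1) / ((m+1).factorial : ℝ) =
          ∫ s in Set.Ioo (0:ℝ) t, (us (m+1) (k+1) : ℝ) * s ^ m / (m.factorial : ℝ) := by
        intro m
        rw [← MeasureTheory.integral_Ioc_eq_integral_Ioo, ← intervalIntegral.integral_of_le h0]
        have hrw : ∀ s : ℝ, (us (m+1) (k+1) : ℝ) * s ^ m / (m.factorial : ℝ)
            = ((us (m+1) (k+1) : ℝ) / (m.factorial : ℝ)) * s ^ m := fun s => by ring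
        simp only [hrw]
        rw [intervalIntegral.integral_const_mul, integral_pow]
        have hf : (((m+1).factorial : ℝ)) = ((m:ℝ)+1) * (m.factorial : ℝ) := by
          exact_mod_cast Nat.factorial_succ m
        rw [zero_pow (Nat.succ_ne_zero m), sub_zero, div_mul_div_comm, hf,
          mul_comm ((m:ℝ)+1) (m.factorial : ℝ)]
      -- ENNReal chain
      set G : ℕ → ℝ → ℝ := fun m s => (us (m+1) (k+1) : ℝ) * s ^ m / (m.factorial : ℝ) with hG
      have hGc : ∀ m, Continuous (G m) := fun m => by
        simp only [hG]; fun_prop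
      have hGint : ∀ m, IntegrableOn (G m) (Set.Ioo 0 t) := fun m =>
        (((hGc m).continuousOn).integrableOn_compact isCompact_Icc).mono_set Set.Ioo_subset_Icc_self
      have hGnn : ∀ m, ∀ s ∈ Set.Ioo (0:ℝ) t, 0 ≤ G m s := by
        intro m s hs
        have hs0 : (0:ℝ) ≤ s := hs.1.le
        simp only [hG]
        positivity
      have hLc : ContinuousOn (fun s : ℝ => (-Real.log (1-s)) ^ k / ((k.factorial : ℝ) * (1-s)))
          (Set.Icc 0 t) := contOn_L k h1
      have hLint : IntegrableOn
          (fun s : ℝ => (-Real.log (1-s)) ^ k / ((k.factorial : ℝ) * (1-s)))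
          (Set.Ioo 0 t) :=
        (hLc.integrableOn_compact isCompact_Icc).mono_set Set.Ioo_subset_Icc_self
      have hLnn : ∀ s ∈ Set.Ioo (0:ℝ) t, 0 ≤ (-Real.log (1-s)) ^ k / ((k.factorial : ℝ) * (1-s)) := by
        intro s hs
        have hs0 : (0:ℝ) < s := hs.1
        have hs1 : s < 1 := lt_of_lt_of_le hs.2 h1.le
        have hlog : 0 ≤ -Real.log (1-s) := by
          have := Real.log_nonpos (x := 1-s) (by linarith) (by linarith)
          linarith
        have h1s : (0:ℝ) < 1 - s := by linarith
        exact div_nonneg (pow_nonneg hlog k) (by positivity)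
      have main : ∑' m : ℕ, ENNReal.ofReal ((us (m+1) (k+1) : ℝ) * t ^ (m+1) / ((m+1).factorial : ℝ))
          = ENNReal.ofReal ((-Real.log (1-t)) ^ (k+1) / ((k+1).factorial : ℝ)) := by
        calc ∑' m : ℕ, ENNReal.ofReal ((us (m+1) (k+1) : ℝ) * t ^ (m+1) / ((m+1).factorial : ℝ))
            = ∑' m : ℕ, ∫⁻ s in Set.Ioo (0:ℝ) t, ENNReal.ofReal (G m s) := by
              refine tsum_congr fun m => ?_
              rw [hterm_int m]
              exact MeasureTheory.ofReal_integral_eq_lintegral_ofReal (hGint m)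
                ((ae_restrict_iff' measurableSet_Ioo).2 (Filter.Eventually.of_forall (hGnn m)))
          _ = ∫⁻ s in Set.Ioo (0:ℝ) t, ∑' m : ℕ, ENNReal.ofReal (G m s) := by
              exact (MeasureTheory.lintegral_tsum fun m =>
                (ENNReal.measurable_ofReal.comp (hGc m).measurable).aemeasurable).symm
          _ = ∫⁻ s in Set.Ioo (0:ℝ) t,
                ENNReal.ofReal ((-Real.log (1-s)) ^ k / ((k.factorial : ℝ) * (1-s))) := by
              refine MeasureTheory.setLIntegral_congr_fun measurableSet_Ioo
                (fun s hs => ?_)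
              have hs0 : (0:ℝ) ≤ s := hs.1.le
              have hs1 : s < 1 := lt_of_lt_of_le hs.2 h1.le
              rw [← ENNReal.ofReal_tsum_of_nonneg (fun m => by positivity)
                (summable_usD k hs0 hs1)]
              rw [key s hs0 hs1]
          _ = ENNReal.ofReal (∫ s in Set.Ioo (0:ℝ) t,
                (-Real.log (1-s)) ^ k / ((k.factorial : ℝ) * (1-s))) := by
              rw [MeasureTheory.ofReal_integral_eq_lintegral_ofReal hLint
                ((ae_restrict_iff' measurableSet_Ioo).2 (Filter.Eventually.of_forall hLnn))]
          _ = ENNReal.ofReal ((-Real.log (1-t)) ^ (k+1) / ((k+1).factorial : ℝ)) := by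
              rw [← MeasureTheory.integral_Ioc_eq_integral_Ioo,
                ← intervalIntegral.integral_of_le h0]
              rw [intervalIntegral.integral_eq_sub_of_hasDerivAt
                (f := fun x : ℝ => (-Real.log (1-x)) ^ (k+1) / ((k+1).factorial : ℝ))
                (fun s hs => hasDerivAt_L k (by
                  rw [Set.uIcc_of_le h0] at hs
                  exact lt_of_le_of_lt hs.2 h1))
                (((contOn_L k h1).mono (by rw [Set.uIcc_of_le h0])).intervalIntegrable)]
              simp
      have h2 : ∀ m : ℕ, 0 ≤ (us (m+1) (k+1) : ℝ) * t ^ (m+1) / ((m+1).factorial : ℝ) :=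
        fun m => by positivity
      have hsum : Summable (fun m : ℕ => (us (m+1) (k+1) : ℝ) * t ^ (m+1) / ((m+1).factorial : ℝ)) :=
        (summable_nat_add_iff 1).2 hA
      rw [← ENNReal.ofReal_tsum_of_nonneg h2 hsum] at main
      have hRnn : 0 ≤ (-Real.log (1-t)) ^ (k+1) / ((k+1).factorial : ℝ) := by
        have hlog : 0 ≤ -Real.log (1-t) := by
          have := Real.log_nonpos (x := 1-t) (by linarith) (by linarith)
          linarith
        exact div_nonneg (pow_nonneg hlog (k+1)) (by positivity)
      exact (ENNReal.ofReal_eq_ofReal_iff (tsum_nonneg h2) hRnn).1 main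

lemma I_rec (m : ℕ) :
    (2*(m:ℝ)+3) * ∫ u in (0:ℝ)..1, (1-u^2)^(m+1)
      = (2*(m:ℝ)+2) * ∫ u in (0:ℝ)..1, (1-u^2)^m := by
  have hderiv : ∀ u ∈ Set.uIcc (0:ℝ) 1, HasDerivAt (fun u : ℝ => u * (1-u^2)^(m+1))
      ((2*(m:ℝ)+3) * (1-u^2)^(m+1) - (2*(m:ℝ)+2) * (1-u^2)^m) u := by
    intro u _
    have h5 : HasDerivAt (fun u : ℝ => 1 - u^2) (-(2*u)) u := by
      simpa using (hasDerivAt_pow 2 u).const_sub 1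
    have h6 := h5.pow (m+1)
    have h7 := (hasDerivAt_id u).mul h6
    refine h7.congr_deriv ?_
    simp only [Nat.add_sub_cancel, Nat.cast_add, Nat.cast_one, id_eq, Pi.pow_apply]
    rw [pow_succ]
    ring
  have hc1 : Continuous (fun u : ℝ => (1-u^2)^(m+1)) := by fun_prop
  have hc2 : Continuous (fun u : ℝ => (1-u^2)^m) := by fun_prop
  have hc : Continuous (fun u : ℝ =>
      (2*(m:ℝ)+3) * (1-u^2)^(m+1) - (2*(m:ℝ)+2) * (1-u^2)^m) := by fun_prop
  have h := intervalIntegral.integral_eq_sub_of_hasDerivAt hderiv (hc.intervalIntegrable 0 1)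
  rw [intervalIntegral.integral_sub ((by fun_prop : Continuous (fun u : ℝ => (2*(m:ℝ)+3) * (1-u^2)^(m+1))).intervalIntegrable 0 1)
    ((by fun_prop : Continuous (fun u : ℝ => (2*(m:ℝ)+2) * (1-u^2)^m)).intervalIntegrable 0 1),
    intervalIntegral.integral_const_mul, intervalIntegral.integral_const_mul] at h
  norm_num at h
  linarith

lemma I_val : ∀ m : ℕ, (∫ u in (0:ℝ)..1, (1-u^2)^m)
    = 4^m * ((m.factorial : ℝ))^2 / (((2*m+1).factorial : ℝ)) := by
  intro m
  induction m with
  | zero => simp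
  | succ m ih =>
      have h := I_rec m
      rw [ih] at h
      have f1 : (((2*(m+1)+1).factorial : ℝ))
          = (2*(m:ℝ)+3) * (2*(m:ℝ)+2) * (((2*m+1).factorial : ℝ)) := by
        have e : 2*(m+1)+1 = (2*m+1) + 1 + 1 := by ring
        rw [e, Nat.factorial_succ, Nat.factorial_succ]
        push_cast
        ring
      have f2 : (((m+1).factorial : ℝ)) = ((m:ℝ)+1) * (m.factorial : ℝ) := by
        exact_mod_cast Nat.factorial_succ m
      have h21 : (((2*m+1).factorial : ℝ)) ≠ 0 := by positivity
      rw [f1, f2, eq_div_iff (by positivity)]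
      field_simp at h
      linear_combination (2*(m:ℝ)+2) * h

lemma log_int (k : ℕ) :
    ∫⁻ u in Set.Ioo (0:ℝ) 1, ENNReal.ofReal ((-Real.log u)^k)
      = ENNReal.ofReal ((k.factorial : ℝ)) := by
  have himg : (fun t : ℝ => Real.exp (-t)) '' Set.Ioi 0 = Set.Ioo 0 1 := by
    ext y
    constructor
    · rintro ⟨t, ht, rfl⟩
      exact ⟨Real.exp_pos _, Real.exp_lt_one_iff.2 (by simp at ht ⊢; linarith)⟩
    · intro hy
      refine ⟨-Real.log y, ?_, by simp only []; rw [neg_neg, Real.exp_log hy.1]⟩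
      simp only [Set.mem_Ioi]
      have := Real.log_neg hy.1 hy.2
      linarith
  have hderiv : ∀ x ∈ Set.Ioi (0:ℝ), HasDerivWithinAt (fun t : ℝ => Real.exp (-t))
      (-Real.exp (-x)) (Set.Ioi 0) x := by
    intro x _
    have h : HasDerivAt (fun t : ℝ => Real.exp (-t)) (Real.exp (-x) * (-1)) x :=
      (Real.hasDerivAt_exp (-x)).comp x (hasDerivAt_neg x)
    have h2 : HasDerivAt (fun t : ℝ => Real.exp (-t)) (-Real.exp (-x)) x := by
      convert h using 1; ring
    exact h2.hasDerivWithinAt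
  have hinj : Set.InjOn (fun t : ℝ => Real.exp (-t)) (Set.Ioi 0) := by
    intro a _ b _ h
    have := Real.exp_injective h
    linarith [neg_inj.1 this]
  have hfun : (fun x : ℝ => |(-Real.exp (-x))| • (fun u : ℝ => (-Real.log u)^k) (Real.exp (-x)))
      = fun x : ℝ => Real.exp (-x) * x ^ k := by
    funext x
    simp [abs_of_pos (Real.exp_pos _), Real.log_exp, smul_eq_mul]
  have hGamma : (∫ x in Set.Ioi (0:ℝ), Real.exp (-x) * x ^ k) = (k.factorial : ℝ) := by
    rw [← Real.Gamma_nat_eq_factorial k, Real.Gamma_eq_integral (by positivity : (0:ℝ) < (k:ℝ)+1)]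
    refine MeasureTheory.setIntegral_congr_fun measurableSet_Ioi fun x hx => ?_
    rw [show ((k:ℝ)+1-1) = ((k:ℕ):ℝ) by ring, Real.rpow_natCast]
  have hGint : MeasureTheory.IntegrableOn (fun x : ℝ => Real.exp (-x) * x ^ k)
      (Set.Ioi 0) := by
    have hg := Real.GammaIntegral_convergent (s := (k:ℝ)+1) (by positivity)
    refine hg.congr_fun (fun x hx => ?_) measurableSet_Ioi
    rw [show ((k:ℝ)+1-1) = ((k:ℕ):ℝ) by ring]; simp only [Real.rpow_natCast]
  have hInt : MeasureTheory.IntegrableOn (fun u : ℝ => (-Real.log u)^k) (Set.Ioo 0 1) := by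
    rw [← himg,
      MeasureTheory.integrableOn_image_iff_integrableOn_abs_deriv_smul
        measurableSet_Ioi hderiv hinj]
    rw [hfun]
    exact hGint
  have hval : (∫ u in Set.Ioo (0:ℝ) 1, (-Real.log u)^k) = (k.factorial : ℝ) := by
    rw [← himg, MeasureTheory.integral_image_eq_integral_abs_deriv_smul
      measurableSet_Ioi hderiv hinj, hfun, hGamma]
  rw [← MeasureTheory.ofReal_integral_eq_lintegral_ofReal hInt
    ((MeasureTheory.ae_restrict_iff' measurableSet_Ioo).2
      (Filter.Eventually.of_forall fun u hu => by
        have := Real.log_neg hu.1 hu.2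
        have h0 : 0 ≤ -Real.log u := by linarith
        exact pow_nonneg h0 k)), hval]

lemma stirlingS1_eq (n k : ℕ) : stirlingS1 n k = (-1:ℝ)^(n+k) * (us n k : ℝ) :=
  prod_coeff n k

theorem two_pow_eq_stirling_central_binom_series (k : ℕ) (hk : 1 ≤ k) :
    (2 : ℝ) ^ k =
      ∑' n : ℕ, (-1) ^ n * 4 ^ (n + k) * stirlingS1 (n + k) k /
        ((Nat.factorial (n + k)) * (2 * (n + k) + 1) * ((2 * (n + k)).choose (n + k))) := by
  classical
  set f : ℕ → ℝ := fun n =>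
    (us (n+k) k : ℝ) * 4^(n+k) * ((n+k).factorial : ℝ) / (((2*(n+k)+1).factorial : ℝ)) with hf
  -- Step 0 : identify the terms of the series with `f`
  have hterm : ∀ n : ℕ,
      (-1:ℝ) ^ n * 4 ^ (n + k) * stirlingS1 (n + k) k /
        (((n+k).factorial : ℝ) * (2 * ((n+k):ℝ) + 1) * (((2 * (n + k)).choose (n + k) : ℝ)))
      = f n := by
    intro n
    have hsign : (-1:ℝ)^n * (-1:ℝ)^((n+k)+k) = 1 := by
      rw [← pow_add, show n + ((n+k)+k) = 2*(n+k) by omega, pow_mul]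
      norm_num
    have hnum : (-1:ℝ)^n * 4^(n+k) * stirlingS1 (n+k) k = (us (n+k) k : ℝ) * 4^(n+k) := by
      rw [stirlingS1_eq]
      calc (-1:ℝ)^n * 4^(n+k) * ((-1:ℝ)^((n+k)+k) * (us (n+k) k : ℝ))
          = ((-1:ℝ)^n * (-1:ℝ)^((n+k)+k)) * ((4:ℝ)^(n+k) * (us (n+k) k : ℝ)) := by ring
        _ = (us (n+k) k : ℝ) * 4^(n+k) := by rw [hsign]; ring
    rw [hnum]
    have hchoosepos : 0 < (2*(n+k)).choose (n+k) := Nat.choose_pos (by omega)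
    have hc : (((2*(n+k)).choose (n+k) : ℝ)) * ((n+k).factorial : ℝ) * ((n+k).factorial : ℝ)
        = (((2*(n+k)).factorial : ℝ)) := by
      have := Nat.choose_mul_factorial_mul_factorial (show n+k ≤ 2*(n+k) by omega)
      rw [show 2*(n+k) - (n+k) = n+k by omega] at this
      exact_mod_cast this
    have hf2 : (((2*(n+k)+1).factorial : ℝ)) = (2*((n+k):ℝ)+1) * (((2*(n+k)).factorial : ℝ)) := by
      have := Nat.factorial_succ (2*(n+k))
      push_cast [this]
      ring
    rw [hf]
    rw [div_eq_div_iff (by positivity) (by positivity)]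
    linear_combination ((us (n+k) k : ℝ) * 4^(n+k)) * hf2
      - ((us (n+k) k : ℝ) * 4^(n+k) * (2*((n+k):ℝ)+1)) * hc
  rw [tsum_congr hterm]
  -- Step 1 : ENNReal computation
  have hE : ∑' n : ℕ, ENNReal.ofReal (f n) = ENNReal.ofReal ((2:ℝ)^k) := by
    have hGc : ∀ n : ℕ, Continuous
        (fun u : ℝ => (us (n+k) k : ℝ) * (1-u^2)^(n+k) / (((n+k).factorial : ℝ))) := by
      intro n; fun_prop
    have hGnn : ∀ n : ℕ, ∀ u ∈ Set.Ioo (0:ℝ) 1,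
        0 ≤ (us (n+k) k : ℝ) * (1-u^2)^(n+k) / (((n+k).factorial : ℝ)) := by
      intro n u hu
      have h1 : (0:ℝ) ≤ 1 - u^2 := by nlinarith [hu.1, hu.2]
      positivity
    calc ∑' n : ℕ, ENNReal.ofReal (f n)
        = ∑' n : ℕ, ∫⁻ u in Set.Ioo (0:ℝ) 1,
            ENNReal.ofReal ((us (n+k) k : ℝ) * (1-u^2)^(n+k) / (((n+k).factorial : ℝ))) := by
          refine tsum_congr fun n => ?_
          have hI : f n = ∫ u in Set.Ioo (0:ℝ) 1,
              (us (n+k) k : ℝ) * (1-u^2)^(n+k) / (((n+k).factorial : ℝ)) := by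
            rw [← MeasureTheory.integral_Ioc_eq_integral_Ioo,
              ← intervalIntegral.integral_of_le zero_le_one]
            have hrw : ∀ u : ℝ, (us (n+k) k : ℝ) * (1-u^2)^(n+k) / (((n+k).factorial : ℝ))
                = ((us (n+k) k : ℝ) / ((n+k).factorial : ℝ)) * (1-u^2)^(n+k) :=
              fun u => by ring
            simp only [hrw]
            rw [intervalIntegral.integral_const_mul, I_val (n+k), hf]
            have h0 : (((n+k).factorial : ℝ)) ≠ 0 := by positivity
            field_simp
          rw [hI]
          exact MeasureTheory.ofReal_integral_eq_lintegral_ofReal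
            (((hGc n).continuousOn.integrableOn_compact isCompact_Icc).mono_set
              Set.Ioo_subset_Icc_self)
            ((MeasureTheory.ae_restrict_iff' measurableSet_Ioo).2
              (Filter.Eventually.of_forall (hGnn n)))
      _ = ∫⁻ u in Set.Ioo (0:ℝ) 1, ∑' n : ℕ,
            ENNReal.ofReal ((us (n+k) k : ℝ) * (1-u^2)^(n+k) / (((n+k).factorial : ℝ))) :=
          (MeasureTheory.lintegral_tsum fun n =>
            (ENNReal.measurable_ofReal.comp (hGc n).measurable).aemeasurable).symm
      _ = ∫⁻ u in Set.Ioo (0:ℝ) 1,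
            ENNReal.ofReal ((2:ℝ)^k * (-Real.log u)^k / ((k.factorial : ℝ))) := by
          refine MeasureTheory.setLIntegral_congr_fun measurableSet_Ioo
            (fun u hu => ?_)
          have hu0 : (0:ℝ) < u := hu.1
          have hu1 : u < 1 := hu.2
          have ht0 : (0:ℝ) ≤ 1 - u^2 := by nlinarith
          have ht1 : 1 - u^2 < 1 := by nlinarith
          have hS := summable_us k ht0 ht1
          have hzero : ∑ i ∈ Finset.range k, (us i k : ℝ) * (1-u^2)^i / ((i.factorial:ℝ)) = 0 :=
            Finset.sum_eq_zero fun i hi => by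
              rw [us_eq_zero_of_lt i k (Finset.mem_range.1 hi)]
              simp
          have hshift := Summable.sum_add_tsum_nat_add
            (f := fun m : ℕ => (us m k : ℝ) * (1-u^2)^m / ((m.factorial:ℝ))) k hS
          rw [hzero, zero_add] at hshift
          have hval : ∑' n : ℕ, (us (n+k) k : ℝ) * (1-u^2)^(n+k) / (((n+k).factorial:ℝ))
              = (2:ℝ)^k * (-Real.log u)^k / ((k.factorial : ℝ)) := by
            rw [hshift, gen k ht0 ht1]
            rw [show (1:ℝ) - (1 - u^2) = u^2 by ring]
            rw [Real.log_pow]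
            rw [show -((2:ℕ) * Real.log u) = 2 * (-Real.log u) by push_cast; ring, mul_pow]
          rw [← hval]
          exact (ENNReal.ofReal_tsum_of_nonneg
            (fun n => by
              have h1 : (0:ℝ) ≤ 1 - u^2 := ht0
              positivity)
            ((summable_nat_add_iff k).2 hS)).symm
      _ = ENNReal.ofReal ((2:ℝ)^k / ((k.factorial : ℝ))) *
            ∫⁻ u in Set.Ioo (0:ℝ) 1, ENNReal.ofReal ((-Real.log u)^k) := by
          have hrw : ∀ u : ℝ, ENNReal.ofReal ((2:ℝ)^k * (-Real.log u)^k / ((k.factorial : ℝ)))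
              = ENNReal.ofReal ((2:ℝ)^k / ((k.factorial : ℝ))) *
                  ENNReal.ofReal ((-Real.log u)^k) := by
            intro u
            rw [← ENNReal.ofReal_mul (by positivity)]
            congr 1
            ring
          simp only [hrw]
          rw [MeasureTheory.lintegral_const_mul' _ _ ENNReal.ofReal_ne_top]
      _ = ENNReal.ofReal ((2:ℝ)^k) := by
          rw [log_int k, ← ENNReal.ofReal_mul (by positivity)]
          congr 1
          have h0 : ((k.factorial : ℝ)) ≠ 0 := by positivity
          field_simp
  -- Step 2 : back to the reals
  have hnn : ∀ n, 0 ≤ f n := fun n => by rw [hf]; positivity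
  have h1 := congrArg ENNReal.toReal hE
  rw [ENNReal.tsum_toReal_eq (fun n => ENNReal.ofReal_ne_top)] at h1
  rw [ENNReal.toReal_ofReal (by positivity : (0:ℝ) ≤ (2:ℝ)^k)] at h1
  have h2 : ∑' n : ℕ, (ENNReal.ofReal (f n)).toReal = ∑' n : ℕ, f n :=
    tsum_congr fun n => ENNReal.toReal_ofReal (hnn n)
  rw [h2] at h1
  exact h1.symm
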